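/- Let s ≥ 1 be an integer and θ ∈ (0,1), and let G be an n-vertex 3-graph, with n sufficiently large, which contains fewer than n^{s+1−θ} induced stars of size s. Then G contains a vertex subset U with |U| ≥ n^{θ/(2s)} such that the induced subgraph G[U] contains no induced star of size s. -/

import Mathlib

open Classical

/-- `(v,S)` is a star in the 3-graph with edge set `E`: every pair of distinct vertices
of `S` forms an edge together with `v`. -/
def IsStar3 {n : ℕ} (E : Finset (Finset (Fin n))) (v : Fin n) (S : Finset (Fin n)) : Prop :=
  v ∉ S ∧ ∀ x ∈ S, ∀ y ∈ S, x ≠ y → ({v, x, y} : Finset (Fin n)) ∈ E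

/-- `(v,S)` is an induced star: a star such that `S` spans no edges. -/
def IsInducedStar3 {n : ℕ} (E : Finset (Finset (Fin n))) (v : Fin n)
    (S : Finset (Fin n)) : Prop :=
  IsStar3 E v S ∧ ∀ e ∈ E, ¬ e ⊆ S

/-- `(v,S)` is an antistar: a star in the complement 3-graph. -/
def IsAntiStar3 {n : ℕ} (E : Finset (Finset (Fin n))) (v : Fin n)
    (S : Finset (Fin n)) : Prop :=
  v ∉ S ∧ ∀ x ∈ S, ∀ y ∈ S, x ≠ y → ({v, x, y} : Finset (Fin n)) ∉ E

/-- `(v,S)` is an induced antistar: an induced star in the complement 3-graph. -/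
def IsInducedAntiStar3 {n : ℕ} (E : Finset (Finset (Fin n))) (v : Fin n)
    (S : Finset (Fin n)) : Prop :=
  IsAntiStar3 E v S ∧ ∀ e : Finset (Fin n), e ⊆ S → e.card = 3 → e ∈ E

lemma count_sup {n : ℕ} (t : ℕ) (A : Finset (Fin n)) (h : A.card ≤ t) :
    (((Finset.univ : Finset (Fin n)).powersetCard t).filter (fun U => A ⊆ U)).card
      = (n - A.card).choose (t - A.card) := by
  have h2 : ((Aᶜ : Finset (Fin n)).powersetCard (t - A.card)).card
      = (n - A.card).choose (t - A.card) := by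
    rw [Finset.card_powersetCard, Finset.card_compl, Fintype.card_fin]
  rw [← h2]
  apply Finset.card_nbij' (fun U => U \ A) (fun V => V ∪ A)
  · intro U hU
    simp only [Finset.mem_coe, Finset.mem_filter, Finset.mem_powersetCard] at hU
    obtain ⟨⟨-, hcard⟩, hAU⟩ := hU
    rw [Finset.mem_coe, Finset.mem_powersetCard]
    constructor
    · intro x hx
      simp only [Finset.mem_compl]
      exact (Finset.mem_sdiff.mp hx).2
    · rw [Finset.card_sdiff_of_subset hAU, hcard]
  · intro V hV
    rw [Finset.mem_coe, Finset.mem_powersetCard] at hV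
    obtain ⟨hVA, hcard⟩ := hV
    have hdis : Disjoint V A := by
      rw [Finset.disjoint_right]
      intro a ha hav
      have := hVA hav
      simp at this
      exact this ha
    simp only [Finset.mem_coe, Finset.mem_filter, Finset.mem_powersetCard]
    refine ⟨⟨Finset.subset_univ _, ?_⟩, Finset.subset_union_right⟩
    rw [Finset.card_union_of_disjoint hdis, hcard]
    omega
  · intro U hU
    simp only [Finset.mem_coe, Finset.mem_filter] at hU
    exact Finset.sdiff_union_of_subset hU.2
  · intro V hV
    rw [Finset.mem_coe, Finset.mem_powersetCard] at hV
    have hdis : Disjoint A V := by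
      rw [Finset.disjoint_left]
      intro a ha hav
      have := hV.1 hav
      simp at this
      exact this ha
    show (V ∪ A) \ A = V
    rw [Finset.union_sdiff_right]
    exact sdiff_eq_self_iff_disjoint.mpr hdis

lemma ev_rpow (a c : ℝ) (ha : 0 < a) : ∃ N : ℕ, ∀ n : ℕ, N ≤ n → c ≤ (n:ℝ) ^ a := by
  have h := (tendsto_rpow_atTop ha).comp tendsto_natCast_atTop_atTop
  exact Filter.eventually_atTop.mp (h.eventually_ge_atTop c)

theorem stmt16 (s : ℕ) (hs : 1 ≤ s) (θ : ℝ) (hθ0 : 0 < θ) (hθ1 : θ < 1) :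
    ∃ n₀ : ℕ, ∀ n : ℕ, n₀ ≤ n →
      ∀ E : Finset (Finset (Fin n)), (∀ e ∈ E, e.card = 3) →
        ((((Finset.univ ×ˢ Finset.powersetCard s (Finset.univ : Finset (Fin n))).filter
            (fun p => IsInducedStar3 E p.1 p.2)).card : ℝ) < (n : ℝ) ^ ((s : ℝ) + 1 - θ)) →
        ∃ U : Finset (Fin n), (n : ℝ) ^ (θ / (2 * (s : ℝ))) ≤ (U.card : ℝ) ∧
          ¬ ∃ v ∈ U, ∃ S ⊆ U, S.card = s ∧ IsInducedStar3 E v S := by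
  set ε : ℝ := θ / (2 * (s : ℝ)) with hε_def
  have hs0 : (0:ℝ) < (s:ℝ) := by exact_mod_cast hs
  have hε_pos : 0 < ε := by positivity
  have hεs : ε * s = θ / 2 := by rw [hε_def, div_mul_eq_mul_div, div_eq_div_iff (by positivity) (by norm_num)]; ring
  have hε_lt : ε < 1 := by
    have hs1 : (1:ℝ) ≤ (s:ℝ) := by exact_mod_cast hs
    have h2s : (2:ℝ) ≤ 2 * (s:ℝ) := by linarith
    have h1 : ε ≤ θ / 2 := div_le_div_of_nonneg_left hθ0.le (by norm_num) h2s
    linarith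
  obtain ⟨N1, hN1⟩ := ev_rpow ε ((s:ℝ) + 1) hε_pos
  obtain ⟨N2, hN2⟩ := ev_rpow (1 - ε) 4 (by linarith)
  obtain ⟨N3, hN3⟩ := ev_rpow (θ/2) ((8:ℝ) ^ (s+1)) (by linarith)
  refine ⟨max (max N1 N2) (max N3 (2*(s+1))), fun n hn E hE3 hP => ?_⟩
  have hnN1 := hN1 n (le_trans (le_max_left _ _ |>.trans (le_max_left _ _)) hn)
  have hnN2 := hN2 n (le_trans (le_max_right _ _ |>.trans (le_max_left _ _)) hn)
  have hnN3 := hN3 n (le_trans (le_max_left _ _ |>.trans (le_max_right _ _)) hn)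
  have hn2k : 2*(s+1) ≤ n := le_trans (le_max_right _ _ |>.trans (le_max_right _ _)) hn
  set k : ℕ := s + 1 with hk_def
  set x : ℝ := (n:ℝ) with hx_def
  have hn_pos : 0 < n := by omega
  have hx : (0:ℝ) < x := by rw [hx_def]; exact_mod_cast hn_pos
  have hx1 : (1:ℝ) ≤ x^ε := le_trans (by norm_num : (1:ℝ) ≤ (s:ℝ)+1) hnN1
  set m : ℕ := ⌈x ^ ε⌉₊ with hm_def
  set t : ℕ := 2 * m with ht_def
  have hm_ge : x ^ ε ≤ (m:ℝ) := Nat.le_ceil _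
  have hm_le : (m:ℝ) ≤ 2 * x ^ ε := by
    have := Nat.ceil_lt_add_one (by positivity : (0:ℝ) ≤ x ^ ε)
    calc (m:ℝ) ≤ x^ε + 1 := by exact_mod_cast this.le
    _ ≤ 2 * x^ε := by linarith
  have ht_le : (t:ℝ) ≤ 4 * x ^ ε := by
    push_cast [ht_def]
    linarith
  have ht_n : t ≤ n := by
    have h4 : (4:ℝ) * x^ε ≤ x := by
      have : x^ε * x^(1-ε) = x := by
        rw [← Real.rpow_add hx]; norm_num
      calc (4:ℝ) * x^ε ≤ x^(1-ε) * x^ε := by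
            apply mul_le_mul_of_nonneg_right hnN2 (by positivity)
        _ = x := by rw [mul_comm]; exact this
    have : (t:ℝ) ≤ (n:ℝ) := le_trans ht_le h4
    exact_mod_cast this
  have hk_m : k ≤ m := by
    have : ((k:ℕ):ℝ) ≤ (m:ℝ) := by
      push_cast [hk_def]
      exact le_trans hnN1 hm_ge
    exact_mod_cast this
  have hk_t : k ≤ t := le_trans hk_m (by omega)
  -- the global set of induced stars
  set P : Finset (Fin n × Finset (Fin n)) :=
    (Finset.univ ×ˢ Finset.powersetCard s (Finset.univ : Finset (Fin n))).filter
      (fun p => IsInducedStar3 E p.1 p.2) with hP_def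
  set T : Finset (Finset (Fin n)) := (Finset.univ : Finset (Fin n)).powersetCard t with hT_def
  have hT_ne : T.Nonempty := by
    rw [hT_def, Finset.powersetCard_nonempty]
    simpa using ht_n
  have hT_card : T.card = n.choose t := by
    rw [hT_def, Finset.card_powersetCard, Finset.card_univ, Fintype.card_fin]
  set bad : Finset (Fin n) → Finset (Fin n × Finset (Fin n)) :=
    fun U => P.filter (fun p => p.1 ∈ U ∧ p.2 ⊆ U) with hbad_def
  -- double counting
  have key : ∑ U ∈ T, (bad U).card = P.card * (n - k).choose (t - k) := by
    have step1 : ∀ U, (bad U).card = ∑ p ∈ P, if p.1 ∈ U ∧ p.2 ⊆ U then 1 else 0 := by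
      intro U; rw [hbad_def]; exact Finset.card_filter _ _
    have step2 : ∀ p ∈ P, (T.filter (fun U => p.1 ∈ U ∧ p.2 ⊆ U)).card
        = (n - k).choose (t - k) := by
      intro p hp
      rw [hP_def, Finset.mem_filter, Finset.mem_product, Finset.mem_powersetCard] at hp
      obtain ⟨⟨-, -, hcard⟩, hstar⟩ := hp
      have hvS : p.1 ∉ p.2 := hstar.1.1
      have hins : (insert p.1 p.2).card = k := by
        rw [Finset.card_insert_of_notMem hvS, hcard]
      have heq : T.filter (fun U => p.1 ∈ U ∧ p.2 ⊆ U)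
          = T.filter (fun U => insert p.1 p.2 ⊆ U) := by
        apply Finset.filter_congr
        intro U _
        exact Finset.insert_subset_iff.symm
      rw [heq, hT_def, count_sup t _ (by rw [hins]; exact hk_t), hins]
    calc ∑ U ∈ T, (bad U).card
        = ∑ U ∈ T, ∑ p ∈ P, if p.1 ∈ U ∧ p.2 ⊆ U then 1 else 0 := by
          exact Finset.sum_congr rfl (fun U _ => step1 U)
      _ = ∑ p ∈ P, ∑ U ∈ T, if p.1 ∈ U ∧ p.2 ⊆ U then 1 else 0 := Finset.sum_comm
      _ = ∑ p ∈ P, (T.filter (fun U => p.1 ∈ U ∧ p.2 ⊆ U)).card := by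
          exact Finset.sum_congr rfl (fun p _ => (Finset.card_filter _ _).symm)
      _ = ∑ p ∈ P, (n - k).choose (t - k) := Finset.sum_congr rfl step2
      _ = P.card * (n - k).choose (t - k) := by rw [Finset.sum_const, smul_eq_mul]
  -- pigeonhole
  obtain ⟨U₀, hU₀T, hle⟩ : ∃ U ∈ T, (bad U).card * T.card
      ≤ P.card * (n - k).choose (t - k) := by
    apply Finset.exists_le_of_sum_le hT_ne
    rw [← Finset.sum_mul, key, Finset.sum_const, smul_eq_mul]
    ring_nf
    exact le_refl _
  rw [hT_card] at hle
  set b : ℕ := (bad U₀).card with hb_def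
  have hchoose_id : n.choose t * t.choose k = n.choose k * (n - k).choose (t - k) :=
    Nat.choose_mul hk_t
  have hcpos : 0 < (n - k).choose (t - k) := Nat.choose_pos (Nat.sub_le_sub_right ht_n k)
  have h1 : b * n.choose k ≤ P.card * t.choose k := by
    have h2 : b * n.choose t * t.choose k
        ≤ P.card * (n - k).choose (t - k) * t.choose k := Nat.mul_le_mul_right _ hle
    rw [mul_assoc, hchoose_id, ← mul_assoc, mul_right_comm P.card] at h2
    exact Nat.le_of_mul_le_mul_right h2 hcpos
  have hdf : b * n.descFactorial k ≤ P.card * t.descFactorial k := by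
    rw [Nat.descFactorial_eq_factorial_mul_choose, Nat.descFactorial_eq_factorial_mul_choose]
    calc b * ((Nat.factorial k) * n.choose k) = (Nat.factorial k) * (b * n.choose k) := by ring
      _ ≤ (Nat.factorial k) * (P.card * t.choose k) := Nat.mul_le_mul_left _ h1
      _ = P.card * ((Nat.factorial k) * t.choose k) := by ring
  have hnat : b * (n + 1 - k) ^ k ≤ P.card * t ^ k :=
    calc b * (n + 1 - k) ^ k ≤ b * n.descFactorial k :=
          Nat.mul_le_mul_left _ (Nat.pow_sub_le_descFactorial n k)
      _ ≤ P.card * t.descFactorial k := hdf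
      _ ≤ P.card * t ^ k := Nat.mul_le_mul_left _ (Nat.descFactorial_le_pow t k)
  have hcast : (b : ℝ) * ((n + 1 - k : ℕ) : ℝ) ^ k ≤ (P.card : ℝ) * (t : ℝ) ^ k := by
    exact_mod_cast hnat
  have hkR : (k : ℝ) = (s : ℝ) + 1 := by rw [hk_def]; push_cast; ring
  have hhalf : x / 2 ≤ ((n + 1 - k : ℕ) : ℝ) := by
    have hkn1 : k ≤ n + 1 := by omega
    rw [Nat.cast_sub hkn1]
    have h2k : ((2 * (s + 1) : ℕ) : ℝ) ≤ (n : ℝ) := by exact_mod_cast hn2k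
    push_cast at h2k ⊢
    rw [hx_def]
    linarith
  have hR1 : (b : ℝ) * (x / 2) ^ k ≤ (P.card : ℝ) * (t : ℝ) ^ k := by
    refine le_trans ?_ hcast
    apply mul_le_mul_of_nonneg_left (pow_le_pow_left₀ (by positivity) hhalf k) (by positivity)
  have hR2 : (P.card : ℝ) * (t : ℝ) ^ k ≤ x ^ ((s : ℝ) + 1 - θ) * (4 * x ^ ε) ^ k := by
    apply mul_le_mul hP.le (pow_le_pow_left₀ (by positivity) ht_le k) (by positivity)
      (by positivity)
  have haux : x ^ ((s : ℝ) + 1 - θ) * (4 * x ^ ε) ^ k ≤ x ^ ε * (x / 2) ^ k := by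
    have e1 : ((4 : ℝ) * x ^ ε) ^ k = 4 ^ k * x ^ (ε * (k : ℝ)) := by
      rw [mul_pow, ← Real.rpow_natCast (x ^ ε) k, ← Real.rpow_mul hx.le]
    have e2 : ((x : ℝ) / 2) ^ k = x ^ ((k : ℝ)) / 2 ^ k := by
      rw [div_pow, Real.rpow_natCast]
    have h8 : (4 : ℝ) ^ k * 2 ^ k ≤ x ^ (θ / 2) := by
      calc (4 : ℝ) ^ k * 2 ^ k = 8 ^ k := by rw [← mul_pow]; norm_num
        _ = 8 ^ (s + 1) := by rw [hk_def]
        _ ≤ x ^ (θ / 2) := hnN3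
    have expeq : (s : ℝ) + 1 - θ + ε * (k : ℝ) + θ / 2 = ε + (k : ℝ) := by
      have h' : ε * ((s : ℝ) + 1) = θ / 2 + ε := by rw [mul_add, hεs, mul_one]
      rw [hkR, h']; ring
    rw [e1, e2]
    calc x ^ ((s : ℝ) + 1 - θ) * (4 ^ k * x ^ (ε * (k : ℝ)))
        = 4 ^ k * x ^ ((s : ℝ) + 1 - θ + ε * (k : ℝ)) := by
          rw [Real.rpow_add hx]; ring
      _ ≤ (x ^ (θ / 2) / 2 ^ k) * x ^ ((s : ℝ) + 1 - θ + ε * (k : ℝ)) := by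
          apply mul_le_mul_of_nonneg_right _ (by positivity)
          rw [le_div_iff₀ (by positivity)]
          exact h8
      _ = x ^ ε * (x ^ ((k : ℝ)) / 2 ^ k) := by
          rw [div_mul_eq_mul_div, ← Real.rpow_add hx,
            show θ / 2 + ((s : ℝ) + 1 - θ + ε * (k : ℝ)) = ε + (k : ℝ) from by linarith,
            Real.rpow_add hx, mul_div_assoc]
  have hbx : (b : ℝ) ≤ x ^ ε := by
    have h := le_trans (le_trans hR1 hR2) haux
    exact le_of_mul_le_mul_right h (by positivity)
  have hbm : b ≤ m := by
    have h : (b : ℝ) ≤ (m : ℝ) := le_trans hbx hm_ge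
    exact_mod_cast h
  refine ⟨U₀ \ ((bad U₀).image Prod.fst), ?_, ?_⟩
  · have hU₀card : U₀.card = t := (Finset.mem_powersetCard.mp (by rwa [hT_def] at hU₀T)).2
    have himg : ((bad U₀).image Prod.fst).card ≤ b := Finset.card_image_le
    have hsd := Finset.le_card_sdiff ((bad U₀).image Prod.fst) U₀
    have hcard : m ≤ (U₀ \ ((bad U₀).image Prod.fst)).card := by omega
    calc x ^ ε ≤ (m : ℝ) := hm_ge
      _ ≤ _ := by exact_mod_cast hcard
  · rintro ⟨v, hv, S, hS, hScard, hstar⟩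
    rw [Finset.mem_sdiff] at hv
    apply hv.2
    apply Finset.mem_image.mpr
    refine ⟨(v, S), ?_, rfl⟩
    apply Finset.mem_filter.mpr
    refine ⟨?_, hv.1, fun a ha => (Finset.mem_sdiff.mp (hS ha)).1⟩
    apply Finset.mem_filter.mpr
    exact ⟨Finset.mem_product.mpr ⟨Finset.mem_univ _,
      Finset.mem_powersetCard.mpr ⟨Finset.subset_univ _, hScard⟩⟩, hstar⟩
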